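/- Let R be a noetherian F-finite normal integral domain of prime characteristic p (F-finite means R is a finitely generated module over its subring of p-th powers), and let 𝔭 ⊆ R be a prime ideal of height 1. Then 𝔭 is a center of F-purity: there exist an integer e ≥ 1 and a p^e-linear map φ on R with φ(𝔭) ⊆ 𝔭 and φ(R) ⊄ 𝔭. -/

import Mathlib

/-- `φ` is a `p^e`-linear map: an additive map with `φ (a^(p^e) * b) = a * φ b`. -/
def IsPLinearMap (p e : ℕ) {R : Type*} [CommRing R] (φ : R →+ R) : Prop :=
  ∀ a b : R, φ (a ^ p ^ e * b) = a * φ b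

/-- `R` is F-finite: `R` is a finitely generated module over its subring of `p`-th powers,
i.e. there is a finite set spanning `R` with coefficients that are `p`-th powers. -/
def FFinite (p : ℕ) (R : Type*) [CommRing R] : Prop :=
  ∃ s : Finset R, ∀ x : R, ∃ c : R → R, x = ∑ y ∈ s, (c y) ^ p * y

/-- A prime ideal of height one: a nonzero prime admitting no prime strictly between it and
the zero ideal. -/
def IsHeightOnePrime {R : Type*} [CommRing R] (𝔭 : Ideal R) : Prop :=
  𝔭.IsPrime ∧ 𝔭 ≠ ⊥ ∧ ∀ q : Ideal R, q.IsPrime → q < 𝔭 → q = ⊥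

section AuxiliaryLemmas

set_option linter.unusedSectionVars false
set_option linter.unusedVariables false

open IsLocalRing


open IsLocalRing

section ValAux

variable {V : Type*} [CommRing V] [IsDomain V] [IsLocalRing V]
  {K : Type*} [Field K] [Algebra V K] [IsFractionRing V K]

theorem val_unique_le {π : V} (hπ : Irreducible π) {n m : ℤ} {u w : Vˣ}
    (hnm : m ≤ n)
    (h : (algebraMap V K π) ^ n * algebraMap V K (u : V)
       = (algebraMap V K π) ^ m * algebraMap V K (w : V)) : n = m := by
  have hinj : Function.Injective (algebraMap V K) := IsFractionRing.injective V K
  have hπ0 : π ≠ 0 := hπ.ne_zero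
  have hπK : algebraMap V K π ≠ 0 := fun h0 => hπ0 (hinj (h0.trans (map_zero _).symm))
  set k : ℕ := (n - m).toNat with hk
  have hnmk : (n - m) = (k : ℤ) := (Int.toNat_of_nonneg (by omega)).symm
  have h2 : (algebraMap V K π) ^ (n - m) * algebraMap V K (u : V) = algebraMap V K (w : V) := by
    have hzm : (algebraMap V K π) ^ m ≠ 0 := zpow_ne_zero _ hπK
    apply mul_left_cancel₀ hzm
    rw [← mul_assoc, ← zpow_add₀ hπK, add_sub_cancel, h]
  rw [hnmk, zpow_natCast, ← map_pow, ← map_mul] at h2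
  have h3 : π ^ k * (u : V) = (w : V) := hinj h2
  have hk0 : k = 0 := by
    by_contra hk0
    exact hπ.not_isUnit (isUnit_of_dvd_unit (h3 ▸ (dvd_pow_self π hk0).mul_right (u : V))
      w.isUnit)
  omega

theorem val_unique {π : V} (hπ : Irreducible π) {n m : ℤ} {u w : Vˣ}
    (h : (algebraMap V K π) ^ n * algebraMap V K (u : V)
       = (algebraMap V K π) ^ m * algebraMap V K (w : V)) : n = m := by
  rcases le_total m n with hnm | hnm
  · exact val_unique_le hπ hnm h
  · exact (val_unique_le hπ hnm h.symm).symm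

theorem val_exists {π : V} (hπ : Irreducible π)
    (hfac : ∀ x : V, x ≠ 0 → ∃ (n : ℕ) (u : Vˣ), x = u * π ^ n) :
    ∀ x : K, ∃ n : ℤ, x ≠ 0 → ∃ u : Vˣ, x = (algebraMap V K π) ^ n * algebraMap V K (u : V) := by
  intro x
  by_cases hx : x = 0
  · exact ⟨0, fun h => absurd hx h⟩
  obtain ⟨a, b, hb, hab⟩ := IsFractionRing.div_surjective (A := V) x
  have hb0 : b ≠ 0 := nonZeroDivisors.ne_zero hb
  have ha0 : a ≠ 0 := by
    rintro rfl
    rw [map_zero, zero_div] at hab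
    exact hx hab.symm
  obtain ⟨n₁, u₁, hu₁⟩ := hfac a ha0
  obtain ⟨n₂, u₂, hu₂⟩ := hfac b hb0
  have hinj : Function.Injective (algebraMap V K) := IsFractionRing.injective V K
  have hπK : algebraMap V K π ≠ 0 :=
    fun h0 => hπ.ne_zero (hinj (h0.trans (map_zero _).symm))
  have hbK : algebraMap V K b ≠ 0 :=
    fun h0 => hb0 (hinj (h0.trans (map_zero _).symm))
  have hu₂K : algebraMap V K (u₂ : V) ≠ 0 :=
    fun h0 => u₂.ne_zero (hinj (h0.trans (map_zero _).symm))
  refine ⟨(n₁ : ℤ) - (n₂ : ℤ), fun _ => ⟨u₁ * u₂⁻¹, ?_⟩⟩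
  rw [← hab, hu₁, hu₂, Units.val_mul, map_mul, map_mul, map_mul, map_pow, map_pow,
    zpow_sub₀ hπK, zpow_natCast, zpow_natCast]
  have hu2inv : algebraMap V K ((u₂⁻¹ : Vˣ) : V) = (algebraMap V K (u₂ : V))⁻¹ := by
    have : algebraMap V K ((u₂ : V) * ((u₂⁻¹ : Vˣ) : V)) = 1 := by
      rw [Units.mul_inv, map_one]
    rw [map_mul] at this
    field_simp at this ⊢
    linear_combination this
  rw [hu2inv]
  field_simp

theorem exists_compatible {p : ℕ} (hp : 0 < p) {π : V} (hπ : Irreducible π)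
    (hspan : maximalIdeal V = Ideal.span {π})
    (hfac : ∀ x : V, x ≠ 0 → ∃ (n : ℕ) (u : Vˣ), x = u * π ^ n)
    (φ₀ : K →+ K) (hlin : ∀ a x : K, φ₀ (a ^ p * x) = a * φ₀ x)
    (x₁ : K) (hx₁ : φ₀ x₁ ≠ 0)
    (d : K) (hd : d ≠ 0)
    (hbdd : ∀ a : V, ∃ b : V, d * φ₀ (algebraMap V K a) = algebraMap V K b) :
    ∃ ψ : K →+ K, (∀ a x : K, ψ (a ^ p * x) = a * ψ x) ∧
      (∀ a : V, ∃ b : V, ψ (algebraMap V K a) = algebraMap V K b ∧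
         (a ∈ maximalIdeal V → b ∈ maximalIdeal V)) ∧
      (∃ a : V, a ∉ maximalIdeal V ∧
         ∀ b : V, ψ (algebraMap V K a) = algebraMap V K b → b ∉ maximalIdeal V) := by
  classical
  have hinj : Function.Injective (algebraMap V K) := IsFractionRing.injective V K
  have hinj0 : ∀ z : V, z ≠ 0 → algebraMap V K z ≠ 0 :=
    fun z hz h0 => hz (hinj (h0.trans (map_zero _).symm))
  have hπK : algebraMap V K π ≠ 0 := hinj0 π hπ.ne_zero
  choose v hv using val_exists (K := K) hπ hfac
  -- basic valuation lemmas
  have hval_eq : ∀ x : K, x ≠ 0 → ∀ (n : ℤ) (u : Vˣ),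
      x = (algebraMap V K π) ^ n * algebraMap V K (u : V) → v x = n := by
    intro x hx n u hxe
    obtain ⟨w, hw⟩ := hv x hx
    exact val_unique hπ (hw.symm.trans hxe)
  have hvmul : ∀ x y : K, x ≠ 0 → y ≠ 0 → v (x * y) = v x + v y := by
    intro x y hx hy
    obtain ⟨u, hu⟩ := hv x hx
    obtain ⟨w, hw⟩ := hv y hy
    refine hval_eq _ (mul_ne_zero hx hy) _ (u * w) ?_
    rw [Units.val_mul, map_mul, zpow_add₀ hπK]
    conv_lhs => rw [hu, hw]
    ring
  have hvzpow : ∀ k : ℤ, v ((algebraMap V K π) ^ k) = k := by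
    intro k
    refine hval_eq _ (zpow_ne_zero _ hπK) _ 1 ?_
    rw [Units.val_one, map_one, mul_one]
  have hvshift : ∀ (k : ℤ) (y : K), y ≠ 0 →
      v ((algebraMap V K π) ^ k * y) = k + v y := by
    intro k y hy
    rw [hvmul _ _ (zpow_ne_zero _ hπK) hy, hvzpow]
  have hvnat : ∀ a : V, a ≠ 0 → 0 ≤ v (algebraMap V K a) ∧
      (a ∈ maximalIdeal V ↔ 1 ≤ v (algebraMap V K a)) := by
    intro a ha
    obtain ⟨n, u, hu⟩ := hfac a ha
    have hrep : algebraMap V K a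
        = (algebraMap V K π) ^ (n : ℤ) * algebraMap V K (u : V) := by
      rw [hu, map_mul, map_pow, zpow_natCast]; ring
    have hva : v (algebraMap V K a) = (n : ℤ) := hval_eq _ (hinj0 a ha) _ u hrep
    constructor
    · rw [hva]; exact_mod_cast Nat.zero_le n
    rw [hva, hspan, Ideal.mem_span_singleton]
    constructor
    · intro hdvd
      rcases Nat.eq_zero_or_pos n with rfl | hn
      · exfalso
        rw [pow_zero, mul_one] at hu
        exact hπ.not_isUnit (isUnit_of_dvd_unit (hu ▸ hdvd) u.isUnit)
      · exact_mod_cast hn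
    · intro hn
      have hn' : n ≠ 0 := by
        have : 1 ≤ n := by exact_mod_cast hn
        omega
      exact hu ▸ ((dvd_pow_self π hn').mul_left (u : V))
  have hvint : ∀ x : K, x ≠ 0 → 0 ≤ v x → ∃ a : V, a ≠ 0 ∧ algebraMap V K a = x := by
    intro x hx hvx
    obtain ⟨u, hu⟩ := hv x hx
    refine ⟨π ^ (v x).toNat * (u : V), mul_ne_zero (pow_ne_zero _ hπ.ne_zero) u.ne_zero, ?_⟩
    rw [map_mul, map_pow, ← zpow_natCast (algebraMap V K π) ((v x).toNat),
      Int.toNat_of_nonneg hvx]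
    exact hu.symm
  -- p-linearity for zpowers of π
  have hzplin : ∀ (k : ℤ) (x : K),
      φ₀ ((algebraMap V K π) ^ ((p : ℤ) * k) * x) = (algebraMap V K π) ^ k * φ₀ x := by
    intro k x
    have h1 : (algebraMap V K π) ^ ((p : ℤ) * k) = ((algebraMap V K π) ^ k) ^ p := by
      rw [mul_comm, zpow_mul, zpow_natCast]
    rw [h1, hlin]
  -- lower bound on twisted values
  have hDbound : ∀ a : V, a ≠ 0 → φ₀ (algebraMap V K a) ≠ 0 →
      -(v d) ≤ v (φ₀ (algebraMap V K a)) := by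
    intro a ha hφa
    obtain ⟨b, hb⟩ := hbdd a
    have hb0 : b ≠ 0 := by
      rintro rfl
      rw [map_zero] at hb
      exact (mul_ne_zero hd hφa) hb
    have := hvmul d _ hd hφa
    rw [hb] at this
    have h0 : 0 ≤ v (algebraMap V K b) := (hvnat b hb0).1
    omega
  have hlow : ∀ x : K, x ≠ 0 → φ₀ x ≠ 0 →
      -((p : ℤ) * (v d + 1)) ≤ (p : ℤ) * v (φ₀ x) - v x := by
    intro x hx hφx
    have hp' : (0 : ℤ) < (p : ℤ) := by exact_mod_cast hp
    set n := v x with hn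
    set k := n / (p : ℤ) with hk
    set j := n % (p : ℤ) with hj
    have hj0 : 0 ≤ j := Int.emod_nonneg n (by omega)
    have hjp : j < (p : ℤ) := Int.emod_lt_of_pos n hp'
    have hnkj : (p : ℤ) * k + j = n := Int.mul_ediv_add_emod n p
    set x₀ : K := (algebraMap V K π) ^ (-((p : ℤ) * k)) * x with hx₀
    have hx₀0 : x₀ ≠ 0 := mul_ne_zero (zpow_ne_zero _ hπK) hx
    have hvx₀ : v x₀ = j := by rw [hx₀, hvshift _ _ hx]; omega
    have hxeq : x = (algebraMap V K π) ^ ((p : ℤ) * k) * x₀ := by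
      rw [hx₀, ← mul_assoc, ← zpow_add₀ hπK]
      simp
    have hφeq : φ₀ x = (algebraMap V K π) ^ k * φ₀ x₀ := by
      rw [hxeq] at hφx ⊢
      rw [hzplin]
    have hφx₀ : φ₀ x₀ ≠ 0 := by
      intro h0
      rw [hφeq, h0, mul_zero] at hφx
      exact hφx rfl
    obtain ⟨a, ha0, haeq⟩ := hvint x₀ hx₀0 (by omega)
    have hbd : -(v d) ≤ v (φ₀ x₀) := haeq ▸ hDbound a ha0 (by rw [haeq]; exact hφx₀)
    have hvφ : v (φ₀ x) = k + v (φ₀ x₀) := by rw [hφeq, hvshift _ _ hφx₀]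
    have hexp : (p : ℤ) * v (φ₀ x) = (p : ℤ) * k + (p : ℤ) * v (φ₀ x₀) := by
      rw [hvφ]; ring
    nlinarith [mul_le_mul_of_nonneg_left hbd (le_of_lt hp')]
  -- minimize
  obtain ⟨c, ⟨xs, hxs0, hφxs, hc⟩, hcmin⟩ := Int.exists_least_of_bdd
    (P := fun c => ∃ x : K, x ≠ 0 ∧ φ₀ x ≠ 0 ∧ c = (p : ℤ) * v (φ₀ x) - v x)
    ⟨-((p : ℤ) * (v d + 1)), fun z ⟨x, hx, hφx, hz⟩ => hz ▸ hlow x hx hφx⟩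
    ⟨(p : ℤ) * v (φ₀ x₁) - v x₁, x₁,
      (fun h => hx₁ (h ▸ map_zero φ₀)), hx₁, rfl⟩
  set nn := v xs with hnn
  set m := v (φ₀ xs) with hm
  set ψ : K →+ K :=
    { toFun := fun x => (algebraMap V K π) ^ (-m) * φ₀ ((algebraMap V K π) ^ nn * x)
      map_zero' := by simp
      map_add' := by intro x y; rw [mul_add, map_add, mul_add] } with hψ
  have hψdef : ∀ x : K, ψ x
      = (algebraMap V K π) ^ (-m) * φ₀ ((algebraMap V K π) ^ nn * x) := fun _ => rfl
  have hψlin : ∀ a x : K, ψ (a ^ p * x) = a * ψ x := by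
    intro a x
    rw [hψdef, hψdef, show (algebraMap V K π) ^ nn * (a ^ p * x)
      = a ^ p * ((algebraMap V K π) ^ nn * x) by ring, hlin]
    ring
  have hψkey : ∀ x : K, x ≠ 0 → ψ x ≠ 0 → v x ≤ (p : ℤ) * v (ψ x) := by
    intro x hx hψx
    set y := (algebraMap V K π) ^ nn * x with hy
    have hy0 : y ≠ 0 := mul_ne_zero (zpow_ne_zero _ hπK) hx
    have hφy : φ₀ y ≠ 0 := by
      intro h0
      exact hψx (by rw [hψdef, ← hy, h0, mul_zero])
    have hvy : v y = nn + v x := hvshift _ _ hx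
    have hvψ : v (ψ x) = -m + v (φ₀ y) := by rw [hψdef, ← hy, hvshift _ _ hφy]
    have hmin := hcmin ((p : ℤ) * v (φ₀ y) - v y) ⟨y, hy0, hφy, rfl⟩
    have hcval : c = (p : ℤ) * m - nn := hc
    have h2 : (p : ℤ) * v (ψ x) = (p : ℤ) * (-m) + (p : ℤ) * v (φ₀ y) := by rw [hvψ]; ring
    have h3 : (p : ℤ) * (-m) = -((p : ℤ) * m) := by ring
    omega
  refine ⟨ψ, hψlin, ?_, ?_⟩
  · intro a
    by_cases ha : a = 0
    · exact ⟨0, by simp [ha], fun _ => zero_mem _⟩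
    by_cases hz : ψ (algebraMap V K a) = 0
    · exact ⟨0, by rw [hz, map_zero], fun _ => zero_mem _⟩
    have haK : algebraMap V K a ≠ 0 := hinj0 a ha
    have h0 : 0 ≤ v (algebraMap V K a) := (hvnat a ha).1
    have hkey := hψkey _ haK hz
    have hp' : (0 : ℤ) < (p : ℤ) := by exact_mod_cast hp
    have hvψ0 : 0 ≤ v (ψ (algebraMap V K a)) := by nlinarith
    obtain ⟨b, hb0, hbeq⟩ := hvint _ hz hvψ0
    refine ⟨b, hbeq.symm, ?_⟩
    intro ha𝔪
    have h1 : 1 ≤ v (algebraMap V K a) := (hvnat a ha).2.mp ha𝔪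
    have h2 : 1 ≤ v (ψ (algebraMap V K a)) := by nlinarith
    exact (hvnat b hb0).2.mpr (by rw [hbeq]; exact h2)
  · -- witness
    set x₀ : K := (algebraMap V K π) ^ (-nn) * xs with hx₀
    have hx₀0 : x₀ ≠ 0 := mul_ne_zero (zpow_ne_zero _ hπK) hxs0
    have hψx₀ : ψ x₀ = (algebraMap V K π) ^ (-m) * φ₀ xs := by
      rw [hψdef, hx₀, ← mul_assoc, ← zpow_add₀ hπK]
      simp
    have hψx₀0 : ψ x₀ ≠ 0 := by
      rw [hψx₀]; exact mul_ne_zero (zpow_ne_zero _ hπK) hφxs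
    have hvx₀ : v x₀ = 0 := by rw [hx₀, hvshift _ _ hxs0]; omega
    have hvψx₀ : v (ψ x₀) = 0 := by
      rw [hψx₀, hvshift _ _ hφxs]; omega
    obtain ⟨a, ha0, haeq⟩ := hvint x₀ hx₀0 (by omega)
    refine ⟨a, ?_, ?_⟩
    · intro ha𝔪
      have := (hvnat a ha0).2.mp ha𝔪
      rw [haeq, hvx₀] at this
      omega
    · intro b hb hb𝔪
      have hb0 : b ≠ 0 := by
        rintro rfl
        exact hψx₀0 (by rw [← haeq, hb, map_zero])
      have := (hvnat b hb0).2.mp hb𝔪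
      rw [← hb, haeq, hvψx₀] at this
      omega

end ValAux

theorem exists_phi0 {p : ℕ} (hp : p.Prime) {K : Type*} [Field K] [CharP K p]
    {ι₀ : Type*} (s : Finset ι₀) (g : ι₀ → K)
    (hs : ∀ x : K, ∃ c : ι₀ → K, x = ∑ y ∈ s, (c y) ^ p * g y) :
    ∃ φ₀ : K →+ K, (∀ a x : K, φ₀ (a ^ p * x) = a * φ₀ x) ∧ ∃ x₁ : K, φ₀ x₁ ≠ 0 := by

  classical
  haveI : Fact p.Prime := ⟨hp⟩
  set L : Subfield K := (frobenius K p).fieldRange with hL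
  haveI : FiniteDimensional L K := by
    refine ⟨⟨s.image g, ?_⟩⟩
    rw [eq_top_iff]
    intro x _
    obtain ⟨c, hc⟩ := hs x
    rw [hc]
    refine Submodule.sum_mem _ fun y hy => ?_
    have hmem : (c y) ^ p ∈ L := ⟨c y, rfl⟩
    have : (c y) ^ p * g y = (⟨(c y) ^ p, hmem⟩ : L) • g y := rfl
    rw [this]
    exact Submodule.smul_mem _ _ (Submodule.subset_span
      (by simp only [Finset.coe_image, Set.mem_image, Finset.mem_coe]; exact ⟨y, hy, rfl⟩))
  have b := Module.Basis.ofVectorSpace L K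
  have hne : Nonempty (Module.Basis.ofVectorSpaceIndex L K) := b.index_nonempty
  obtain ⟨i⟩ := hne
  set lam := b.coord i with hlam
  have hroot : ∀ x : K, ∃ y : K, y ^ p = ((lam x : L) : K) := by
    intro x
    obtain ⟨z, hz⟩ := (lam x).2
    exact ⟨z, hz⟩
  choose f hf using hroot
  have hpinj : Function.Injective (fun z : K => z ^ p) := frobenius_inj K p
  have hadd : ∀ x y : K, f (x + y) = f x + f y := by
    intro x y
    apply hpinj
    show f (x + y) ^ p = (f x + f y) ^ p
    rw [hf, add_pow_char, hf, hf, map_add]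
    push_cast
    ring
  refine ⟨AddMonoidHom.mk' f hadd, ?_, ?_⟩
  · intro a x
    apply hpinj
    show f (a ^ p * x) ^ p = (a * f x) ^ p
    have hmem : a ^ p ∈ L := ⟨a, rfl⟩
    have hsm : a ^ p * x = (⟨a ^ p, hmem⟩ : L) • x := rfl
    rw [hf, hsm, map_smul, mul_pow, hf, smul_eq_mul, MulMemClass.coe_mul]
  · refine ⟨b i, ?_⟩
    intro h0
    have h0' : f (b i) = 0 := h0
    have := hf (b i)
    rw [h0'] at this
    rw [hlam, Module.Basis.coord_apply, Module.Basis.repr_self, Finsupp.single_eq_same] at this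
    rw [zero_pow hp.ne_zero] at this
    exact one_ne_zero (by exact_mod_cast this.symm)

end AuxiliaryLemmas

open IsLocalRing

/-- In a noetherian F-finite normal domain, every height-one prime is a center of F-purity. -/
theorem heightOnePrime_is_center_of_FPurity (p : ℕ) (hp : p.Prime)
    (R : Type*) [CommRing R] [IsDomain R] [IsNoetherianRing R] [IsIntegrallyClosed R]
    [CharP R p] (hff : FFinite p R)
    (𝔭 : Ideal R) (h𝔭 : IsHeightOnePrime 𝔭) :
    ∃ e : ℕ, 1 ≤ e ∧ ∃ φ : R →+ R, IsPLinearMap p e φ ∧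
      (∀ x ∈ 𝔭, φ x ∈ 𝔭) ∧ ¬ (∀ x : R, φ x ∈ 𝔭) := by
  classical
  obtain ⟨hpr, hne, hmin⟩ := h𝔭
  haveI := hpr
  haveI : Fact p.Prime := ⟨hp⟩
  have hRKinj : Function.Injective (algebraMap R (FractionRing R)) :=
    IsFractionRing.injective R (FractionRing R)
  haveI : CharP (FractionRing R) p := charP_of_injective_algebraMap hRKinj p
  haveI hVnoeth : IsNoetherianRing (Localization.AtPrime 𝔭) :=
    IsLocalization.isNoetherianRing 𝔭.primeCompl _ ‹IsNoetherianRing R›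
  haveI hVic : IsIntegrallyClosed (Localization.AtPrime 𝔭) :=
    isIntegrallyClosed_of_isLocalization _ 𝔭.primeCompl 𝔭.primeCompl_le_nonZeroDivisors
  have hRVinj : Function.Injective (algebraMap R (Localization.AtPrime 𝔭)) :=
    IsLocalization.injective _ 𝔭.primeCompl_le_nonZeroDivisors
  have hVKinj : Function.Injective
      (algebraMap (Localization.AtPrime 𝔭) (FractionRing R)) :=
    IsFractionRing.injective _ _
  have htower : ∀ r : R, algebraMap (Localization.AtPrime 𝔭) (FractionRing R)
      (algebraMap R (Localization.AtPrime 𝔭) r) = algebraMap R (FractionRing R) r :=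
    fun r => (IsScalarTower.algebraMap_apply R (Localization.AtPrime 𝔭) (FractionRing R) r).symm
  -- V is not a field
  obtain ⟨z, hz𝔭, hz0⟩ := Submodule.exists_mem_ne_zero_of_ne_bot hne
  have hVnf : ¬IsField (Localization.AtPrime 𝔭) := by
    intro hf
    have h𝔪 : maximalIdeal (Localization.AtPrime 𝔭) = ⊥ :=
      IsLocalRing.isField_iff_maximalIdeal_eq.mp hf
    have hz𝔪 : algebraMap R (Localization.AtPrime 𝔭) z ∈
        maximalIdeal (Localization.AtPrime 𝔭) :=
      (IsLocalization.AtPrime.to_map_mem_maximal_iff _ 𝔭 z).mpr hz𝔭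
    rw [h𝔪, Ideal.mem_bot] at hz𝔪
    exact hz0 (hRVinj (by rw [hz𝔪, map_zero]))
  have h𝔪ne : maximalIdeal (Localization.AtPrime 𝔭) ≠ ⊥ :=
    fun h => hVnf (IsLocalRing.isField_iff_maximalIdeal_eq.mpr h)
  -- unique nonzero prime
  have huniq : ∀ Q : Ideal (Localization.AtPrime 𝔭), Q ≠ ⊥ ∧ Q.IsPrime →
      Q = maximalIdeal (Localization.AtPrime 𝔭) := by
    rintro Q ⟨hQ0, hQp⟩
    haveI := hQp
    have hle : Q.comap (algebraMap R (Localization.AtPrime 𝔭)) ≤ 𝔭 := by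
      intro r hr
      by_contra hr𝔭
      have hu : IsUnit (algebraMap R (Localization.AtPrime 𝔭) r) :=
        (IsLocalization.AtPrime.isUnit_to_map_iff _ 𝔭 r).mpr hr𝔭
      exact hQp.ne_top (Q.eq_top_of_isUnit_mem hr hu)
    rcases lt_or_eq_of_le hle with hlt | heq
    · exfalso
      have hbot : Q.comap (algebraMap R (Localization.AtPrime 𝔭)) = ⊥ :=
        hmin _ inferInstance hlt
      have hQ := IsLocalization.map_comap 𝔭.primeCompl (Localization.AtPrime 𝔭) Q
      rw [Ideal.under_def, hbot, Ideal.map_bot] at hQ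
      exact hQ0 hQ.symm
    · rw [← IsLocalization.map_comap 𝔭.primeCompl (Localization.AtPrime 𝔭) Q, Ideal.under_def, heq,
        Localization.AtPrime.map_eq_maximalIdeal]
  haveI hdvr : IsDiscreteValuationRing (Localization.AtPrime 𝔭) := by
    have hiff := (IsDiscreteValuationRing.TFAE (Localization.AtPrime 𝔭) hVnf).out 0 3
    exact hiff.mpr ⟨hVic, maximalIdeal (Localization.AtPrime 𝔭),
      ⟨h𝔪ne, (maximalIdeal.isMaximal _).isPrime⟩, fun Q hQ => huniq Q hQ⟩
  obtain ⟨π, hπ⟩ := IsDiscreteValuationRing.exists_irreducible (Localization.AtPrime 𝔭)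
  have hspan := hπ.maximalIdeal_eq
  have hfac : ∀ x : Localization.AtPrime 𝔭, x ≠ 0 →
      ∃ (n : ℕ) (u : (Localization.AtPrime 𝔭)ˣ), x = u * π ^ n :=
    fun x hx => IsDiscreteValuationRing.eq_unit_mul_pow_irreducible hx hπ
  -- F-finiteness data
  obtain ⟨s, hffs⟩ := hff
  have hRK0 : ∀ r : R, r ≠ 0 → algebraMap R (FractionRing R) r ≠ 0 :=
    fun r hr h0 => hr (hRKinj (h0.trans (map_zero _).symm))
  have hKspan : ∀ x : FractionRing R, ∃ c : R → FractionRing R,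
      x = ∑ y ∈ s, (c y) ^ p * algebraMap R (FractionRing R) y := by
    intro x
    obtain ⟨a, bb, hbb, hab⟩ := IsFractionRing.div_surjective (A := R) x
    have hbb0 : bb ≠ 0 := nonZeroDivisors.ne_zero hbb
    have hbbK : algebraMap R (FractionRing R) bb ≠ 0 := hRK0 bb hbb0
    obtain ⟨c, hc⟩ := hffs (a * bb ^ (p - 1))
    refine ⟨fun y => algebraMap R _ (c y) / algebraMap R _ bb, ?_⟩
    have hterm : ∀ y ∈ s, (algebraMap R (FractionRing R) (c y)
          / algebraMap R (FractionRing R) bb) ^ p * algebraMap R (FractionRing R) y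
        = ((algebraMap R (FractionRing R) (c y)) ^ p * algebraMap R (FractionRing R) y)
          / (algebraMap R (FractionRing R) bb) ^ p := by
      intro y _
      rw [div_pow, div_mul_eq_mul_div]
    rw [Finset.sum_congr rfl hterm, ← Finset.sum_div]
    have hsum : (∑ y ∈ s, (algebraMap R (FractionRing R) (c y)) ^ p
          * algebraMap R (FractionRing R) y)
        = algebraMap R (FractionRing R) (a * bb ^ (p - 1)) := by
      rw [hc, map_sum]
      exact Finset.sum_congr rfl fun y _ => by rw [map_mul, map_pow]
    rw [hsum, ← hab]
    rw [div_eq_div_iff hbbK (pow_ne_zero _ hbbK), ← map_pow, ← map_mul, ← map_mul]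
    congr 1
    rw [mul_assoc, ← pow_succ, Nat.sub_add_cancel hp.one_le]
  obtain ⟨φ₀, hφlin, x₁, hx₁⟩ := exists_phi0 hp s
    (fun y => algebraMap R (FractionRing R) y) hKspan
  -- span lemma for p-linear maps
  have hspanlem : ∀ g : FractionRing R →+ FractionRing R,
      (∀ a x : FractionRing R, g (a ^ p * x) = a * g x) → ∀ t : R, ∃ c : R → R,
      g (algebraMap R (FractionRing R) t)
        = ∑ y ∈ s, algebraMap R (FractionRing R) (c y)
            * g (algebraMap R (FractionRing R) y) := by
    intro g hg t
    obtain ⟨c, hc⟩ := hffs t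
    refine ⟨c, ?_⟩
    rw [hc, map_sum, map_sum]
    exact Finset.sum_congr rfl fun y _ => by rw [map_mul, map_pow, hg]
  -- bounded denominators for φ₀
  have hden : ∀ y : R, ∃ ab : R × R, ab.2 ≠ 0 ∧
      φ₀ (algebraMap R (FractionRing R) y)
        = algebraMap R (FractionRing R) ab.1 / algebraMap R (FractionRing R) ab.2 := by
    intro y
    obtain ⟨a, bb, hbb, hab⟩ := IsFractionRing.div_surjective (A := R)
      (φ₀ (algebraMap R (FractionRing R) y))
    exact ⟨(a, bb), nonZeroDivisors.ne_zero hbb, hab.symm⟩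
  choose AB hB hAB using hden
  have hd₀0 : (∏ y ∈ s, (AB y).2) ≠ 0 := Finset.prod_ne_zero_iff.mpr fun y _ => hB y
  have hdK : algebraMap R (FractionRing R) (∏ y ∈ s, (AB y).2) ≠ 0 := hRK0 _ hd₀0
  have hbR : ∀ t : R, ∃ T : R,
      algebraMap R (FractionRing R) (∏ y ∈ s, (AB y).2)
          * φ₀ (algebraMap R (FractionRing R) t)
        = algebraMap R (FractionRing R) T := by
    intro t
    obtain ⟨c, hc⟩ := hspanlem φ₀ hφlin t
    refine ⟨∑ y ∈ s, c y * ((AB y).1 * ∏ z ∈ s.erase y, (AB z).2), ?_⟩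
    rw [hc, Finset.mul_sum, map_sum]
    refine Finset.sum_congr rfl fun y hy => ?_
    rw [hAB y, map_mul, map_mul]
    have hBK : algebraMap R (FractionRing R) (AB y).2 ≠ 0 := hRK0 _ (hB y)
    have hsplit : (∏ x ∈ s, (AB x).2) = (AB y).2 * ∏ z ∈ s.erase y, (AB z).2 :=
      (Finset.mul_prod_erase s _ hy).symm
    rw [hsplit, map_mul]
    field_simp
  -- algebraMap-mk' helper
  have hspecK : ∀ (a : Localization.AtPrime 𝔭) (r : R) (s' : 𝔭.primeCompl),
      IsLocalization.mk' (Localization.AtPrime 𝔭) r s' = a →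
      algebraMap (Localization.AtPrime 𝔭) (FractionRing R) a
          * algebraMap R (FractionRing R) (s' : R)
        = algebraMap R (FractionRing R) r := by
    intro a r s' hrs
    rw [← hrs, ← htower, ← htower, ← map_mul, IsLocalization.mk'_spec]
  have hmkpow : ∀ (a : Localization.AtPrime 𝔭) (r : R) (s' : 𝔭.primeCompl),
      IsLocalization.mk' (Localization.AtPrime 𝔭) r s' = a →
      algebraMap R (FractionRing R) (r * (s' : R) ^ (p - 1))
        = (algebraMap R (FractionRing R) (s' : R)) ^ p
          * algebraMap (Localization.AtPrime 𝔭) (FractionRing R) a := by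
    intro a r s' hrs
    rw [map_mul, map_pow, ← hspecK a r s' hrs]
    have hpow : algebraMap R (FractionRing R) (s' : R)
          * (algebraMap R (FractionRing R) (s' : R)) ^ (p - 1)
        = (algebraMap R (FractionRing R) (s' : R)) ^ p := by
      rw [← pow_succ', Nat.sub_add_cancel hp.one_le]
    rw [mul_assoc, hpow]
    ring
  have hs'0 : ∀ s' : 𝔭.primeCompl, (s' : R) ≠ 0 :=
    fun s' h => s'.2 (h ▸ 𝔭.zero_mem)
  -- bounded denominators over V
  have hbddV : ∀ a : Localization.AtPrime 𝔭, ∃ b : Localization.AtPrime 𝔭,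
      algebraMap R (FractionRing R) (∏ y ∈ s, (AB y).2)
          * φ₀ (algebraMap (Localization.AtPrime 𝔭) (FractionRing R) a)
        = algebraMap (Localization.AtPrime 𝔭) (FractionRing R) b := by
    intro a
    obtain ⟨⟨r, s'⟩, hrs⟩ := IsLocalization.mk'_surjective 𝔭.primeCompl a
    have hs'K : algebraMap R (FractionRing R) (s' : R) ≠ 0 := hRK0 _ (hs'0 s')
    obtain ⟨T, hT⟩ := hbR (r * (s' : R) ^ (p - 1))
    refine ⟨IsLocalization.mk' _ T s', ?_⟩
    apply mul_right_cancel₀ hs'K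
    rw [hspecK _ T s' rfl]
    have hstep : algebraMap R (FractionRing R) (s' : R)
          * φ₀ (algebraMap (Localization.AtPrime 𝔭) (FractionRing R) a)
        = φ₀ (algebraMap R (FractionRing R) (r * (s' : R) ^ (p - 1))) := by
      rw [hmkpow a r s' hrs, hφlin]
    calc algebraMap R (FractionRing R) (∏ y ∈ s, (AB y).2)
          * φ₀ (algebraMap (Localization.AtPrime 𝔭) (FractionRing R) a)
          * algebraMap R (FractionRing R) (s' : R)
        = algebraMap R (FractionRing R) (∏ y ∈ s, (AB y).2)
          * (algebraMap R (FractionRing R) (s' : R)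
            * φ₀ (algebraMap (Localization.AtPrime 𝔭) (FractionRing R) a)) := by ring
      _ = algebraMap R (FractionRing R) T := by rw [hstep, hT]
  -- the compatible map ψ
  obtain ⟨ψ, hψlin, hψint, a₀, ha₀, hb₀⟩ :=
    exists_compatible hp.pos hπ hspan hfac φ₀ hφlin x₁ hx₁ _ hdK hbddV
  -- clear denominators back to R
  have hW : ∀ y : R, ∃ b : Localization.AtPrime 𝔭,
      ψ (algebraMap R (FractionRing R) y)
        = algebraMap (Localization.AtPrime 𝔭) (FractionRing R) b ∧
      (algebraMap R (Localization.AtPrime 𝔭) y ∈ maximalIdeal (Localization.AtPrime 𝔭)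
        → b ∈ maximalIdeal (Localization.AtPrime 𝔭)) := by
    intro y
    obtain ⟨b, hb1, hb2⟩ := hψint (algebraMap R (Localization.AtPrime 𝔭) y)
    rw [htower] at hb1
    exact ⟨b, hb1, hb2⟩
  choose W hW1 hW2 using hW
  choose Rf Sf hRS using fun y : R => (by obtain ⟨⟨r, s'⟩, h⟩ := IsLocalization.mk'_surjective 𝔭.primeCompl (W y); exact ⟨r, s', h⟩ : ∃ (r : R) (s' : 𝔭.primeCompl), IsLocalization.mk' (Localization.AtPrime 𝔭) r s' = W y)
  have hs₀mem : (∏ y ∈ s, (Sf y : R)) ∈ 𝔭.primeCompl :=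
    Submonoid.prod_mem _ fun y _ => (Sf y).2
  have hkey2 : ∀ y ∈ s,
      algebraMap R (FractionRing R) (∏ x ∈ s, (Sf x : R))
          * ψ (algebraMap R (FractionRing R) y)
        = algebraMap R (FractionRing R) (Rf y * ∏ z ∈ s.erase y, (Sf z : R)) := by
    intro y hy
    rw [hW1 y]
    have hsplit : (∏ x ∈ s, (Sf x : R)) = (Sf y : R) * ∏ z ∈ s.erase y, (Sf z : R) :=
      (Finset.mul_prod_erase s _ hy).symm
    rw [hsplit, map_mul (algebraMap R (FractionRing R)) ((Sf y : R))
      (∏ z ∈ s.erase y, (Sf z : R))]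
    have := hspecK (W y) (Rf y) (Sf y) (hRS y)
    calc algebraMap R (FractionRing R) (Sf y : R)
          * algebraMap R (FractionRing R) (∏ z ∈ s.erase y, (Sf z : R))
          * algebraMap (Localization.AtPrime 𝔭) (FractionRing R) (W y)
        = (algebraMap (Localization.AtPrime 𝔭) (FractionRing R) (W y)
            * algebraMap R (FractionRing R) (Sf y : R))
          * algebraMap R (FractionRing R) (∏ z ∈ s.erase y, (Sf z : R)) := by
          ring
      _ = algebraMap R (FractionRing R) (Rf y)
          * algebraMap R (FractionRing R) (∏ z ∈ s.erase y, (Sf z : R)) := by rw [this]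
      _ = algebraMap R (FractionRing R) (Rf y * ∏ z ∈ s.erase y, (Sf z : R)) := by
          rw [map_mul]
  have hclear : ∀ t : R, ∃ T : R,
      algebraMap R (FractionRing R) (∏ x ∈ s, (Sf x : R))
          * ψ (algebraMap R (FractionRing R) t)
        = algebraMap R (FractionRing R) T := by
    intro t
    obtain ⟨c, hc⟩ := hspanlem ψ hψlin t
    refine ⟨∑ y ∈ s, c y * (Rf y * ∏ z ∈ s.erase y, (Sf z : R)), ?_⟩
    rw [hc, Finset.mul_sum, map_sum]
    refine Finset.sum_congr rfl fun y hy => ?_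
    rw [map_mul]
    linear_combination (algebraMap R (FractionRing R) (c y)) * hkey2 y hy
  choose Φ hΦ using hclear
  have hΦadd : ∀ x y : R, Φ (x + y) = Φ x + Φ y := by
    intro x y
    apply hRKinj
    rw [map_add]
    simp only [← hΦ]
    rw [map_add, map_add, mul_add]
  refine ⟨1, le_refl 1, AddMonoidHom.mk' Φ hΦadd, ?_, ?_, ?_⟩
  · intro a b
    show Φ (a ^ p ^ 1 * b) = a * Φ b
    rw [pow_one]
    apply hRKinj
    rw [map_mul]
    simp only [← hΦ]
    rw [map_mul, map_pow, hψlin]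
    ring
  · intro t ht
    show Φ t ∈ 𝔭
    have hWt : W t ∈ maximalIdeal (Localization.AtPrime 𝔭) :=
      hW2 t ((IsLocalization.AtPrime.to_map_mem_maximal_iff _ 𝔭 t).mpr ht)
    have hVeq : algebraMap (Localization.AtPrime 𝔭) (FractionRing R)
        (algebraMap R (Localization.AtPrime 𝔭) (Φ t))
        = algebraMap (Localization.AtPrime 𝔭) (FractionRing R)
          (algebraMap R (Localization.AtPrime 𝔭) (∏ x ∈ s, (Sf x : R)) * W t) := by
      rw [htower, ← hΦ t, hW1 t, map_mul, htower]
    have h2 : algebraMap R (Localization.AtPrime 𝔭) (Φ t)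
        = algebraMap R (Localization.AtPrime 𝔭) (∏ x ∈ s, (Sf x : R)) * W t :=
      hVKinj hVeq
    refine (IsLocalization.AtPrime.to_map_mem_maximal_iff
      (Localization.AtPrime 𝔭) 𝔭 (Φ t)).mp ?_
    rw [h2]
    exact Ideal.mul_mem_left _ _ hWt
  · intro hall
    obtain ⟨⟨r0, u0⟩, hru⟩ := IsLocalization.mk'_surjective 𝔭.primeCompl a₀
    obtain ⟨b₀, hb₀1, _⟩ := hψint a₀
    have hb₀𝔪 : b₀ ∉ maximalIdeal (Localization.AtPrime 𝔭) := hb₀ b₀ hb₀1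
    set t : R := r0 * (u0 : R) ^ (p - 1) with ht
    have hKt : algebraMap R (FractionRing R) t
        = (algebraMap R (FractionRing R) (u0 : R)) ^ p
          * algebraMap (Localization.AtPrime 𝔭) (FractionRing R) a₀ :=
      hmkpow a₀ r0 u0 hru
    have hψt : ψ (algebraMap R (FractionRing R) t)
        = algebraMap R (FractionRing R) (u0 : R)
          * algebraMap (Localization.AtPrime 𝔭) (FractionRing R) b₀ := by
      rw [hKt, hψlin, hb₀1]
    have hVeq : algebraMap (Localization.AtPrime 𝔭) (FractionRing R)
        (algebraMap R (Localization.AtPrime 𝔭) (Φ t))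
        = algebraMap (Localization.AtPrime 𝔭) (FractionRing R)
          (algebraMap R (Localization.AtPrime 𝔭) ((∏ x ∈ s, (Sf x : R)) * (u0 : R)) * b₀) := by
      rw [htower, ← hΦ t, hψt, map_mul, htower, map_mul]
      ring
    have h2 : algebraMap R (Localization.AtPrime 𝔭) (Φ t)
        = algebraMap R (Localization.AtPrime 𝔭) ((∏ x ∈ s, (Sf x : R)) * (u0 : R)) * b₀ :=
      hVKinj hVeq
    have hmem : algebraMap R (Localization.AtPrime 𝔭) (Φ t)
        ∈ maximalIdeal (Localization.AtPrime 𝔭) :=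
      (IsLocalization.AtPrime.to_map_mem_maximal_iff _ 𝔭 (Φ t)).mpr (hall t)
    rw [h2] at hmem
    haveI h𝔪pr : (maximalIdeal (Localization.AtPrime 𝔭)).IsPrime :=
      (maximalIdeal.isMaximal _).isPrime
    rcases h𝔪pr.mem_or_mem hmem with hmem1 | hmem2
    · have : (∏ x ∈ s, (Sf x : R)) * (u0 : R) ∈ 𝔭 :=
        (IsLocalization.AtPrime.to_map_mem_maximal_iff _ 𝔭 _).mp hmem1
      rcases hpr.mem_or_mem this with h | h
      · exact hs₀mem h
      · exact u0.2 h
    · exact hb₀𝔪 hmem2
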